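/- Let I ⊆ ℝⁿ be a nonempty compact set, let F : I → Set ℝⁿ be upper semicontinuous with F(x) nonempty, compact, and convex for every x ∈ I, and let (F_k)_{k≥1} be a sequence of continuous set-valued maps from I to ℝⁿ with nonempty, compact, convex values such that for every x ∈ I and every k ≥ 1: F_{k+1}(x) ⊆ F_k(x), F(x) ⊆ int(F_k(x)), and ⋂_{k≥1} F_k(x) = F(x). Then the sequence converges graphically to F on I: for every σ > 0 there exists k₀ such that for every k ≥ k₀, every x ∈ I, and every y ∈ F_k(x), the distance of (x, y) to the graph {(z, w) : z ∈ I, w ∈ F(z)} of F is at most σ. -/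

import Mathlib

open Metric Set Filter MeasureTheory
open scoped Pointwise RealInnerProductSpace Topology

variable {E : Type*} [NormedAddCommGroup E] [NormedSpace ℝ E]

/-- Admissible solution domains: `[0,T]`, `[0,T)`, or `[0,∞)`. -/
def SolDomain (D : Set ℝ) : Prop :=
  (∃ T : ℝ, 0 ≤ T ∧ D = Set.Icc 0 T) ∨ (∃ T : ℝ, 0 < T ∧ D = Set.Ico 0 T) ∨ D = Set.Ici 0

/-- `φ` is a (locally absolutely continuous) solution of `ẋ ∈ F x` on `D`,
expressed in integral form: `φ t = φ 0 + ∫₀ᵗ v`, with `v t ∈ F (φ t)` a.e. on `D`. -/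
def IsSolutionOn (F : E → Set E) (φ : ℝ → E) (D : Set ℝ) : Prop :=
  SolDomain D ∧ ∃ v : ℝ → E,
    (∀ t ∈ D, MeasureTheory.IntegrableOn v (Set.Icc 0 t)) ∧
    (∀ t ∈ D, φ t = φ 0 + ∫ s in (0:ℝ)..t, v s) ∧
    (∀ᵐ t ∂(MeasureTheory.volume.restrict D), v t ∈ F (φ t))

/-- Safety: no solution starting in `Xo` ever reaches `Xu`. -/
def Safe (F : E → Set E) (Xo Xu : Set E) : Prop :=
  ∀ (φ : ℝ → E) (D : Set ℝ), IsSolutionOn F φ D → φ 0 ∈ Xo → ∀ t ∈ D, φ t ∉ Xu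

/-- Forward invariance of `K`. -/
def ForwardInvariant (F : E → Set E) (K : Set E) : Prop :=
  ∀ (φ : ℝ → E) (D : Set ℝ), IsSolutionOn F φ D → φ 0 ∈ K → ∀ t ∈ D, φ t ∈ K

/-- Image of a set under a set-valued map: `F(S) = ⋃_{y ∈ S} F(y)`. -/
def svImage (F : E → Set E) (S : Set E) : Set E := ⋃ y ∈ S, F y

/-- Right-hand side of the strongly perturbed system `Σ^s_ε`:
`conv (F (x + ε(x)𝔹)) + ε(x)𝔹`. -/
def strongPert (F : E → Set E) (ε : E → ℝ) (x : E) : Set E :=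
  convexHull ℝ (svImage F (Metric.closedBall x (ε x))) + Metric.closedBall (0:E) (ε x)

/-- Right-hand side of the (ordinary) perturbed system `Σ_ε`: `F x + ε(x)𝔹`. -/
def pert (F : E → Set E) (ε : E → ℝ) (x : E) : Set E :=
  F x + Metric.closedBall (0:E) (ε x)

def RobustlySafe (F : E → Set E) (Xo Xu : Set E) : Prop :=
  ∃ ε : E → ℝ, Continuous ε ∧ (∀ x, 0 < ε x) ∧ Safe (pert F ε) Xo Xu

def StronglyRobustlySafe (F : E → Set E) (Xo Xu : Set E) : Prop :=
  ∃ ε : E → ℝ, Continuous ε ∧ (∀ x, 0 < ε x) ∧ Safe (strongPert F ε) Xo Xu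

def UniformlyStronglyRobustlySafe (F : E → Set E) (Xo Xu : Set E) : Prop :=
  ∃ ε : ℝ, 0 < ε ∧ Safe (strongPert F (fun _ => ε)) Xo Xu

/-- Upper semicontinuity of a set-valued map. -/
def UpperSemicontinuousSV (F : E → Set E) : Prop :=
  ∀ x : E, ∀ U : Set E, IsOpen U → F x ⊆ U → ∀ᶠ y in nhds x, F y ⊆ U

/-- Lower semicontinuity of a set-valued map (sequential form). -/
def LowerSemicontinuousSV (F : E → Set E) : Prop :=
  ∀ x : E, ∀ y ∈ F x, ∀ u : ℕ → E, Filter.Tendsto u Filter.atTop (nhds x) →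
    ∃ v : ℕ → E, (∀ i, v i ∈ F (u i)) ∧ Filter.Tendsto v Filter.atTop (nhds y)

/-- A nested sequence of continuous set-valued maps `F_k` with nonempty
compact convex values on a nonempty compact `I`, with `F x ⊆ int (F_k x)` and
`⋂_k F_k x = F x`, converges graphically to `F` on `I`. -/
theorem stmt17 {n : ℕ} (I : Set (EuclideanSpace ℝ (Fin n))) (hIne : I.Nonempty)
    (hIc : IsCompact I)
    (F : EuclideanSpace ℝ (Fin n) → Set (EuclideanSpace ℝ (Fin n)))
    (hFusc : ∀ x ∈ I, ∀ U : Set (EuclideanSpace ℝ (Fin n)), IsOpen U → F x ⊆ U →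
      ∀ᶠ y in nhdsWithin x I, F y ⊆ U)
    (hFne : ∀ x ∈ I, (F x).Nonempty) (hFcpt : ∀ x ∈ I, IsCompact (F x))
    (hFcvx : ∀ x ∈ I, Convex ℝ (F x))
    (Fk : ℕ → EuclideanSpace ℝ (Fin n) → Set (EuclideanSpace ℝ (Fin n)))
    (hFkusc : ∀ k, ∀ x ∈ I, ∀ U : Set (EuclideanSpace ℝ (Fin n)), IsOpen U → Fk k x ⊆ U →
      ∀ᶠ y in nhdsWithin x I, Fk k y ⊆ U)
    (hFklsc : ∀ k, ∀ x ∈ I, ∀ y ∈ Fk k x, ∀ u : ℕ → EuclideanSpace ℝ (Fin n),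
      (∀ i, u i ∈ I) → Filter.Tendsto u Filter.atTop (nhds x) →
      ∃ v : ℕ → EuclideanSpace ℝ (Fin n), (∀ i, v i ∈ Fk k (u i)) ∧
        Filter.Tendsto v Filter.atTop (nhds y))
    (hFkne : ∀ k, ∀ x ∈ I, (Fk k x).Nonempty) (hFkcpt : ∀ k, ∀ x ∈ I, IsCompact (Fk k x))
    (hFkcvx : ∀ k, ∀ x ∈ I, Convex ℝ (Fk k x))
    (hdec : ∀ k, ∀ x ∈ I, Fk (k + 1) x ⊆ Fk k x)
    (hint : ∀ k, ∀ x ∈ I, F x ⊆ interior (Fk k x))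
    (hcap : ∀ x ∈ I, ⋂ k, Fk k x = F x) :
    ∀ σ > (0:ℝ), ∃ k₀ : ℕ, ∀ k ≥ k₀, ∀ x ∈ I, ∀ y ∈ Fk k x,
      Metric.infDist
        ((WithLp.equiv 2 (EuclideanSpace ℝ (Fin n) × EuclideanSpace ℝ (Fin n))).symm (x, y))
        ((WithLp.equiv 2 (EuclideanSpace ℝ (Fin n) × EuclideanSpace ℝ (Fin n))).symm ''
          {p : EuclideanSpace ℝ (Fin n) × EuclideanSpace ℝ (Fin n) | p.1 ∈ I ∧ p.2 ∈ F p.1})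
        ≤ σ  := by
  classical
  intro σ hσ
  by_contra hcon
  push_neg at hcon
  set e := (WithLp.equiv 2 (EuclideanSpace ℝ (Fin n) × EuclideanSpace ℝ (Fin n))).symm with he
  set G := ⇑e '' {p : EuclideanSpace ℝ (Fin n) × EuclideanSpace ℝ (Fin n) |
    p.1 ∈ I ∧ p.2 ∈ F p.1} with hGdef
  -- monotonicity of the family
  have hmono : ∀ x ∈ I, ∀ i j : ℕ, i ≤ j → Fk j x ⊆ Fk i x := by
    intro x hx i j hij
    induction j, hij using Nat.le_induction with
    | base => exact subset_rfl
    | succ j hij ih => exact (hdec j x hx).trans ih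
  -- uniform boundedness of Fk 0 on I
  have hbd : ∃ R : ℝ, ∀ x ∈ I, Fk 0 x ⊆ closedBall (0:EuclideanSpace ℝ (Fin n)) R := by
    have h1 : ∀ x ∈ I, ∃ r : ℝ, Fk 0 x ⊆ ball (0:EuclideanSpace ℝ (Fin n)) r := fun x hx =>
      (hFkcpt 0 x hx).isBounded.subset_ball 0
    choose r hr using h1
    have h2 : ∀ x (hx : x ∈ I), ∃ U : Set (EuclideanSpace ℝ (Fin n)), U ∈ 𝓝 x ∧
        ∀ y ∈ U, y ∈ I → Fk 0 y ⊆ ball (0:EuclideanSpace ℝ (Fin n)) (r x hx) := by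
      intro x hx
      have h3 := hFkusc 0 x hx (ball (0:EuclideanSpace ℝ (Fin n)) (r x hx)) isOpen_ball (hr x hx)
      rw [eventually_nhdsWithin_iff] at h3
      exact ⟨_, h3, fun y hy => hy⟩
    choose U hU hU2 using h2
    obtain ⟨t, ht⟩ := hIc.elim_nhds_subcover' U hU
    obtain ⟨x₀, hx₀⟩ := hIne
    obtain ⟨i, hi, -⟩ := mem_iUnion₂.mp (ht hx₀)
    have htne : t.Nonempty := ⟨i, hi⟩
    refine ⟨t.sup' htne (fun j : I => r j.1 j.2), fun x hx => ?_⟩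
    obtain ⟨j, hj, hxj⟩ := mem_iUnion₂.mp (ht hx)
    refine (hU2 j j.2 x hxj hx).trans ((ball_subset_closedBall).trans
      (closedBall_subset_closedBall (Finset.le_sup' (fun j : I => r j.1 j.2) hj)))
  obtain ⟨R, hR⟩ := hbd
  -- each graph is closed
  have hcg : ∀ k : ℕ, IsClosed {p : EuclideanSpace ℝ (Fin n) × EuclideanSpace ℝ (Fin n) |
      p.1 ∈ I ∧ p.2 ∈ Fk k p.1} := by
    intro k
    rw [← isSeqClosed_iff_isClosed]
    intro u p hu hup
    have hx1 : Tendsto (fun i => (u i).1) atTop (𝓝 p.1) := (continuous_fst.tendsto p).comp hup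
    have hy1 : Tendsto (fun i => (u i).2) atTop (𝓝 p.2) := (continuous_snd.tendsto p).comp hup
    have hp1 : p.1 ∈ I := hIc.isClosed.mem_of_tendsto hx1 (Eventually.of_forall fun i => (hu i).1)
    refine ⟨hp1, ?_⟩
    have key : ∀ δ > (0:ℝ), infDist p.2 (Fk k p.1) ≤ δ := by
      intro δ hδ
      have h3 := hFkusc k p.1 hp1 (thickening δ (Fk k p.1)) isOpen_thickening
        (self_subset_thickening hδ _)
      rw [eventually_nhdsWithin_iff] at h3
      have h4 : ∀ᶠ i in atTop, infDist ((u i).2) (Fk k p.1) ≤ δ := by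
        filter_upwards [hx1.eventually h3] with i hi
        exact le_of_lt ((mem_thickening_iff_infDist_lt (hFkne k p.1 hp1)).mp
          (hi (hu i).1 (hu i).2))
      exact le_of_tendsto (((continuous_infDist_pt (Fk k p.1)).tendsto p.2).comp hy1) h4
    have h0 : infDist p.2 (Fk k p.1) = 0 := by
      by_contra h
      have h1 : 0 < infDist p.2 (Fk k p.1) := lt_of_le_of_ne infDist_nonneg (Ne.symm h)
      linarith [key _ (half_pos h1)]
    exact ((hFkcpt k p.1 hp1).isClosed.mem_iff_infDist_zero (hFkne k p.1 hp1)).mpr h0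
  -- the homeomorphism
  set h : (EuclideanSpace ℝ (Fin n) × EuclideanSpace ℝ (Fin n)) ≃ₜ
      WithLp 2 (EuclideanSpace ℝ (Fin n) × EuclideanSpace ℝ (Fin n)) :=
    (WithLp.prodContinuousLinearEquiv 2 ℝ (EuclideanSpace ℝ (Fin n))
      (EuclideanSpace ℝ (Fin n))).toHomeomorph.symm with hh
  have hcoe : ⇑h = ⇑e := rfl
  have hLc : Continuous (⇑e) := hcoe ▸ h.continuous
  -- the bad sets
  set C := {p : EuclideanSpace ℝ (Fin n) × EuclideanSpace ℝ (Fin n) |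
    σ ≤ infDist (e p) G} with hCdef
  have hCc : IsClosed C := isClosed_Ici.preimage ((continuous_infDist_pt G).comp hLc)
  set A : ℕ → Set (WithLp 2 (EuclideanSpace ℝ (Fin n) × EuclideanSpace ℝ (Fin n))) :=
    fun k => ⇑e '' ({p : EuclideanSpace ℝ (Fin n) × EuclideanSpace ℝ (Fin n) |
      p.1 ∈ I ∧ p.2 ∈ Fk k p.1} ∩ C) with hA
  have hAc : ∀ k, IsClosed (A k) := by
    intro k
    have := h.isClosedMap _ ((hcg k).inter hCc)
    rwa [hcoe] at this
  have hA0 : IsCompact (A 0) := by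
    have hsub : {p : EuclideanSpace ℝ (Fin n) × EuclideanSpace ℝ (Fin n) |
        p.1 ∈ I ∧ p.2 ∈ Fk 0 p.1} ∩ C ⊆ I ×ˢ closedBall (0:EuclideanSpace ℝ (Fin n)) R :=
      fun p hp => ⟨hp.1.1, hR p.1 hp.1.1 hp.1.2⟩
    have hK : IsCompact ({p : EuclideanSpace ℝ (Fin n) × EuclideanSpace ℝ (Fin n) |
        p.1 ∈ I ∧ p.2 ∈ Fk 0 p.1} ∩ C) :=
      (hIc.prod (isCompact_closedBall _ _)).of_isClosed_subset ((hcg 0).inter hCc) hsub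
    exact hK.image hLc
  have hdecA : ∀ k, A (k + 1) ⊆ A k := by
    intro k
    refine image_mono (inter_subset_inter_left _ ?_)
    exact fun p hp => ⟨hp.1, hdec k p.1 hp.1 hp.2⟩
  have hAne : ∀ k, (A k).Nonempty := by
    intro k
    obtain ⟨k', hk', x, hx, y, hy, hlt⟩ := hcon k
    exact ⟨e (x, y), ⟨(x, y), ⟨⟨hx, hmono x hx k k' hk' hy⟩, le_of_lt hlt⟩, rfl⟩⟩
  obtain ⟨q, hq⟩ := IsCompact.nonempty_iInter_of_sequence_nonempty_isCompact_isClosed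
    A hdecA hAne hA0 hAc
  set p := (WithLp.equiv 2 (EuclideanSpace ℝ (Fin n) × EuclideanSpace ℝ (Fin n))) q with hpdef
  have hp : ∀ k, ((p.1 ∈ I ∧ p.2 ∈ Fk k p.1) ∧ σ ≤ infDist (e p) G) := by
    intro k
    obtain ⟨p', hp', hpe⟩ := mem_iInter.mp hq k
    have hpp : p' = p := by rw [hpdef, ← hpe, Equiv.apply_symm_apply]
    rwa [hpp] at hp'
  have hpF : p.2 ∈ F p.1 := by
    rw [← hcap p.1 (hp 0).1.1]
    exact mem_iInter.mpr fun k => (hp k).1.2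
  have h0 : infDist (e p) G = 0 := infDist_zero_of_mem ⟨p, ⟨(hp 0).1.1, hpF⟩, rfl⟩
  linarith [(hp 0).2]
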